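/- Let ℓ be a prime, m ≥ 1, and let M be a 2×2 matrix over ZMod ℓ^m whose characteristic polynomial, reduced modulo ℓ, is irreducible over the field ZMod ℓ. Then M has no nontrivial invariant cyclic subgroup of (ZMod ℓ^m)²; equivalently, for every nonzero x ∈ (ZMod ℓ^m)², the vector M·x does not lie in the cyclic subgroup generated by x. -/

import Mathlib

/-- Let `ℓ` be a prime, `m ≥ 1`, and `M` a `2×2` matrix over `ZMod ℓ^m` whose characteristic
polynomial, reduced modulo `ℓ`, is irreducible over the field `ZMod ℓ`.  Then `M` has no
nontrivial invariant cyclic subgroup of `(ZMod ℓ^m)²`; equivalently, for every nonzero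
`x ∈ (ZMod ℓ^m)²`, the vector `M·x` does not lie in the cyclic subgroup generated by `x`. -/
theorem stmt_12 (ℓ m : ℕ) (hℓ : ℓ.Prime) (hm : 1 ≤ m)
    (M : Matrix (Fin 2) (Fin 2) (ZMod (ℓ ^ m)))
    (hirr : Irreducible
      (M.charpoly.map (ZMod.castHom (dvd_pow_self ℓ (Nat.one_le_iff_ne_zero.mp hm)) (ZMod ℓ)))) :
    (∀ H : AddSubgroup (Fin 2 → ZMod (ℓ ^ m)),
      (∃ x : Fin 2 → ZMod (ℓ ^ m), H = AddSubgroup.zmultiples x) →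
      (∀ h ∈ H, M.mulVec h ∈ H) → H = ⊥) ∧
    ∀ x : Fin 2 → ZMod (ℓ ^ m), x ≠ 0 → M.mulVec x ∉ AddSubgroup.zmultiples x := by
  classical
  haveI : Fact ℓ.Prime := ⟨hℓ⟩
  rcases m with _ | m'
  · exact absurd hm (by omega)
  haveI : NeZero (ℓ ^ (m' + 1)) := ⟨pow_ne_zero _ hℓ.pos.ne'⟩
  set f : ZMod (ℓ ^ (m' + 1)) →+* ZMod ℓ :=
    ZMod.castHom (dvd_pow_self ℓ (Nat.one_le_iff_ne_zero.mp hm)) (ZMod ℓ) with hf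
  have hℓ0 : (ℓ : ℕ) ≠ 0 := hℓ.pos.ne'
  -- f a = 0 ↔ ℓ ∣ a.val
  have hf0 : ∀ a : ZMod (ℓ ^ (m' + 1)), f a = 0 ↔ ℓ ∣ a.val := by
    intro a
    rw [hf, ZMod.castHom_apply, ← ZMod.natCast_val, ZMod.natCast_eq_zero_iff]
  -- divisibility key 1
  have key1 : ∀ a : ZMod (ℓ ^ (m' + 1)), (ℓ : ZMod (ℓ ^ (m' + 1))) * a = 0 →
      ∃ b, a = (ℓ : ZMod (ℓ ^ (m' + 1))) ^ m' * b := by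
    intro a ha
    have h1 : ((ℓ * a.val : ℕ) : ZMod (ℓ ^ (m' + 1))) = 0 := by
      push_cast
      rw [ZMod.natCast_val, ZMod.cast_id]
      exact ha
    rw [ZMod.natCast_eq_zero_iff] at h1
    have h1' : ℓ * ℓ ^ m' ∣ ℓ * a.val := by rw [← pow_succ']; exact h1
    obtain ⟨t, ht⟩ := (mul_dvd_mul_iff_left hℓ0).mp h1'
    refine ⟨(t : ZMod (ℓ ^ (m' + 1))), ?_⟩
    have h2 : a = ((a.val : ℕ) : ZMod (ℓ ^ (m' + 1))) := by rw [ZMod.natCast_val, ZMod.cast_id]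
    rw [h2, ht]
    push_cast
    ring
  -- divisibility key 2
  have key2 : ∀ a : ZMod (ℓ ^ (m' + 1)), (ℓ : ZMod (ℓ ^ (m' + 1))) ^ m' * a = 0 → f a = 0 := by
    intro a ha
    have h1 : ((ℓ ^ m' * a.val : ℕ) : ZMod (ℓ ^ (m' + 1))) = 0 := by
      push_cast
      rw [ZMod.natCast_val, ZMod.cast_id]
      exact ha
    rw [ZMod.natCast_eq_zero_iff] at h1
    have h1' : ℓ ^ m' * ℓ ∣ ℓ ^ m' * a.val := by rw [← pow_succ]; exact h1
    rw [hf0]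
    exact (mul_dvd_mul_iff_left (pow_ne_zero m' hℓ0)).mp h1'
  have main : ∀ x : Fin 2 → ZMod (ℓ ^ (m' + 1)), x ≠ 0 →
      M.mulVec x ∉ AddSubgroup.zmultiples x := by
    intro x hx hmem
    rw [AddSubgroup.mem_zmultiples_iff] at hmem
    obtain ⟨n, hn⟩ := hmem
    -- find the largest power of ℓ not killing x
    have hPm : ((ℓ : ZMod (ℓ ^ (m' + 1))) ^ (m' + 1)) • x = 0 := by
      have h0 : ((ℓ : ZMod (ℓ ^ (m' + 1))) ^ (m' + 1)) = 0 := by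
        rw [← Nat.cast_pow, ZMod.natCast_self]
      rw [h0, zero_smul]
    have hex : ∃ j, ((ℓ : ZMod (ℓ ^ (m' + 1))) ^ j) • x = 0 := ⟨m' + 1, hPm⟩
    have hN0 : Nat.find hex ≠ 0 := by
      intro h0
      have h1 := Nat.find_spec hex
      rw [h0, pow_zero, one_smul] at h1
      exact hx h1
    obtain ⟨k, hk⟩ : ∃ k, Nat.find hex = k + 1 :=
      ⟨Nat.find hex - 1, (Nat.succ_pred_eq_of_pos (Nat.pos_of_ne_zero hN0)).symm⟩
    set x' : Fin 2 → ZMod (ℓ ^ (m' + 1)) := ((ℓ : ZMod (ℓ ^ (m' + 1))) ^ k) • x with hx'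
    have hx'0 : x' ≠ 0 := Nat.find_min hex (by omega)
    have hℓx' : ∀ i, (ℓ : ZMod (ℓ ^ (m' + 1))) * x' i = 0 := by
      intro i
      have h1 := Nat.find_spec hex
      rw [hk] at h1
      have h2 := congrFun h1 i
      simpa [hx', pow_succ, mul_comm, mul_assoc, mul_left_comm] using h2
    -- eigen equation for x'
    have hn' : ∀ i, (n : ZMod (ℓ ^ (m' + 1))) * x' i = M.mulVec x' i := by
      intro i
      have h1 := congrFun hn i
      have h2 : (n : ZMod (ℓ ^ (m' + 1))) * x i = M.mulVec x i := by
        simpa [zsmul_eq_mul] using h1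
      have h3 : (ℓ : ZMod (ℓ ^ (m' + 1))) ^ k * ((n : ZMod (ℓ ^ (m' + 1))) * x i) =
          (ℓ : ZMod (ℓ ^ (m' + 1))) ^ k * M.mulVec x i := by rw [h2]
      calc (n : ZMod (ℓ ^ (m' + 1))) * x' i
          = (ℓ : ZMod (ℓ ^ (m' + 1))) ^ k * ((n : ZMod (ℓ ^ (m' + 1))) * x i) := by
            simp [hx']; ring
        _ = (ℓ : ZMod (ℓ ^ (m' + 1))) ^ k * M.mulVec x i := h3
        _ = M.mulVec x' i := by
            rw [hx', Matrix.mulVec_smul]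
            simp
    -- extract y with x' = ℓ^m' • y
    choose y hy using fun i => key1 (x' i) (hℓx' i)
    set ybar : Fin 2 → ZMod ℓ := fun i => f (y i) with hybar
    have hybar0 : ybar ≠ 0 := by
      intro h0
      apply hx'0
      funext i
      have h1 : f (y i) = 0 := congrFun h0 i
      obtain ⟨s, hs⟩ := (hf0 (y i)).mp h1
      have h2 : y i = ((s * ℓ : ℕ) : ZMod (ℓ ^ (m' + 1))) := by
        have h2' : y i = ((y i).val : ZMod (ℓ ^ (m' + 1))) := by
          rw [ZMod.natCast_val, ZMod.cast_id]
        rw [h2', hs]; push_cast; ring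
      have h3 : x' i = (ℓ : ZMod (ℓ ^ (m' + 1))) ^ (m' + 1) * (s : ZMod (ℓ ^ (m' + 1))) := by
        rw [hy i, h2]; push_cast; ring
      have h4 : ((ℓ : ZMod (ℓ ^ (m' + 1))) ^ (m' + 1)) = 0 := by
        rw [← Nat.cast_pow, ZMod.natCast_self]
      rw [Pi.zero_apply, h3, h4, zero_mul]
    -- reduce eigen equation mod ℓ
    have hEig : ∀ i, (M.map f).mulVec ybar i = (n : ZMod ℓ) * ybar i := by
      intro i
      have h1 : (ℓ : ZMod (ℓ ^ (m' + 1))) ^ m' *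
          (M.mulVec y i - (n : ZMod (ℓ ^ (m' + 1))) * y i) = 0 := by
        have e1 : (ℓ : ZMod (ℓ ^ (m' + 1))) ^ m' * M.mulVec y i = M.mulVec x' i := by
          have e1' : x' = ((ℓ : ZMod (ℓ ^ (m' + 1))) ^ m') • y := by
            funext j; rw [Pi.smul_apply, smul_eq_mul, ← hy j]
          rw [e1', Matrix.mulVec_smul]; simp
        have e2 : (ℓ : ZMod (ℓ ^ (m' + 1))) ^ m' * ((n : ZMod (ℓ ^ (m' + 1))) * y i) =
            (n : ZMod (ℓ ^ (m' + 1))) * x' i := by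
          rw [hy i]; ring
        rw [mul_sub, e1, e2, hn' i, sub_self]
      have h2 := key2 _ h1
      have h2' : f (M.mulVec y i) - f ((n : ZMod (ℓ ^ (m' + 1))) * y i) = 0 := by
        rw [← map_sub]; exact h2
      have h3 : f (M.mulVec y i) = (n : ZMod ℓ) * ybar i := by
        rw [sub_eq_zero.mp h2']
        rw [map_mul, hybar]
        congr 1
        simp [hf]
      rw [← h3]
      simp [Matrix.mulVec, dotProduct, map_sum, map_mul, hybar, Matrix.map_apply]
    -- determinant of (n • 1 - M.map f) vanishes
    have hdet : ((n : ZMod ℓ) • (1 : Matrix (Fin 2) (Fin 2) (ZMod ℓ)) - M.map f).det = 0 := by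
      rw [← Matrix.exists_mulVec_eq_zero_iff]
      refine ⟨ybar, hybar0, ?_⟩
      funext i
      rw [Matrix.sub_mulVec, Pi.sub_apply, hEig i]
      simp [Matrix.sub_mulVec, Matrix.smul_mulVec, Matrix.one_mulVec, hEig i,
        Pi.smul_apply, smul_eq_mul, sub_eq_zero]
    -- (n : ZMod ℓ) is a root of the reduced charpoly
    have hroot : (M.charpoly.map f).IsRoot (n : ZMod ℓ) := by
      rw [← Matrix.charpoly_map]
      unfold Matrix.charpoly
      rw [Polynomial.IsRoot.def, ← Polynomial.coe_evalRingHom, RingHom.map_det]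
      rw [← hdet]
      congr 1
      ext i j
      by_cases h : i = j
      · subst h; simp [Matrix.charmatrix_apply_eq, Matrix.sub_apply, Matrix.one_apply]
      · simp [Matrix.charmatrix_apply_ne _ _ _ h, Matrix.sub_apply, Matrix.one_apply_ne h,
          Matrix.smul_apply]
    have hdeg := Polynomial.degree_eq_one_of_irreducible_of_root hirr hroot
    have hdeg2 : (M.charpoly.map f).degree = 2 := by
      rw [← Matrix.charpoly_map, Matrix.charpoly_degree_eq_dim, Fintype.card_fin]
      norm_num
    rw [hdeg] at hdeg2
    exact absurd hdeg2 (by norm_num)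
  refine ⟨?_, main⟩
  rintro H ⟨x, rfl⟩ hinv
  by_cases hx : x = 0
  · subst hx
    simp
  · exact absurd (hinv x (AddSubgroup.mem_zmultiples x)) (main x hx)
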